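/- The five families of prewavelets ψ^{j,1}_{0,k} = 2φ^{j+1}_{1,2k} + φ^{j+1}_{1,2k+1}, ψ^{j,2}_{k,0} = 2φ^{j+1}_{2k,1} + φ^{j+1}_{2k+1,1} (1 ≤ k ≤ n−1), and ψ^{j,3}_{i,k} = −φ^{j+1}_{2i,2k} + φ^{j+1}_{2i+1,2k} + φ^{j+1}_{2i,2k+1} + φ^{j+1}_{2i+1,2k+1}, ψ^{j,4}_{i,k} = φ^{j+1}_{2i−1,2k−1} + φ^{j+1}_{2i,2k−1} + φ^{j+1}_{2i−1,2k} − φ^{j+1}_{2i,2k}, ψ^{j,5}_{i,k} = φ^{j+1}_{2i−1,2k} + φ^{j+1}_{2i,2k+1} − φ^{j+1}_{2i,2k−1} − φ^{j+1}_{2i+1,2k} (1 ≤ i,k ≤ n−1) are linearly independent, for every 2 ≤ n ≤ 2ʲ−1. -/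
import Mathlib


noncomputable section
open MeasureTheory

/-- The unit square Ω = (0,1) × (0,1). -/
def Omg : Set (ℝ × ℝ) := Set.Ioo 0 1 ×ˢ Set.Ioo 0 1

/-- Partial derivative in the x-direction. -/
def pdx (f : (ℝ × ℝ) → ℝ) (x : ℝ × ℝ) : ℝ := fderiv ℝ f x (1, 0)

/-- Partial derivative in the y-direction. -/
def pdy (f : (ℝ × ℝ) → ℝ) (x : ℝ × ℝ) : ℝ := fderiv ℝ f x (0, 1)

/-- The Dirichlet inner product ⟨u,v⟩ₛ = ∫_Ω ∇u·∇v. -/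
def dirInner (u v : (ℝ × ℝ) → ℝ) : ℝ :=
  ∫ x in Omg, pdx u x * pdx v x + pdy u x * pdy v x

/-- The piecewise-linear hat function of mesh `h` centered at `p` on the
type-1 (three-direction) triangulation. -/
def hat (h : ℝ) (p x : ℝ × ℝ) : ℝ :=
  max 0 (1 - (max |x.1 - p.1| (max |x.2 - p.2| |(x.1 - p.1) - (x.2 - p.2)|)) / h)

/-- The hat function φʲ_{(m,n)} at the vertex (m/2ʲ, n/2ʲ) of the type-1
triangulation of Ω of mesh 2^{-j} (vanishing on ∂Ω for interior vertices). -/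
def hatL (j m n : ℕ) : (ℝ × ℝ) → ℝ :=
  hat ((2 : ℝ) ^ j)⁻¹ ((m : ℝ) / 2 ^ j, (n : ℝ) / 2 ^ j)

/-- The five families of prewavelets of level j, truncation parameter n,
indexed by (k) for the two boundary families (k = 1,…,n−1 encoded as
Fin (n−1)) and by (i,k) for the three interior families. -/
def preWavelet (j n : ℕ)
    (idx : (Fin (n - 1) ⊕ Fin (n - 1)) ⊕
      (Fin (n - 1) × Fin (n - 1)) ⊕ (Fin (n - 1) × Fin (n - 1)) ⊕
      (Fin (n - 1) × Fin (n - 1))) : (ℝ × ℝ) → ℝ :=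
  match idx with
  | Sum.inl (Sum.inl a) => fun x =>
      2 * hatL (j + 1) 1 (2 * ((a : ℕ) + 1)) x + hatL (j + 1) 1 (2 * ((a : ℕ) + 1) + 1) x
  | Sum.inl (Sum.inr a) => fun x =>
      2 * hatL (j + 1) (2 * ((a : ℕ) + 1)) 1 x + hatL (j + 1) (2 * ((a : ℕ) + 1) + 1) 1 x
  | Sum.inr (Sum.inl (a, b)) => fun x =>
      -hatL (j + 1) (2 * ((a : ℕ) + 1)) (2 * ((b : ℕ) + 1)) x +
        hatL (j + 1) (2 * ((a : ℕ) + 1) + 1) (2 * ((b : ℕ) + 1)) x +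
        hatL (j + 1) (2 * ((a : ℕ) + 1)) (2 * ((b : ℕ) + 1) + 1) x +
        hatL (j + 1) (2 * ((a : ℕ) + 1) + 1) (2 * ((b : ℕ) + 1) + 1) x
  | Sum.inr (Sum.inr (Sum.inl (a, b))) => fun x =>
      hatL (j + 1) (2 * ((a : ℕ) + 1) - 1) (2 * ((b : ℕ) + 1) - 1) x +
        hatL (j + 1) (2 * ((a : ℕ) + 1)) (2 * ((b : ℕ) + 1) - 1) x +
        hatL (j + 1) (2 * ((a : ℕ) + 1) - 1) (2 * ((b : ℕ) + 1)) x -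
        hatL (j + 1) (2 * ((a : ℕ) + 1)) (2 * ((b : ℕ) + 1)) x
  | Sum.inr (Sum.inr (Sum.inr (a, b))) => fun x =>
      hatL (j + 1) (2 * ((a : ℕ) + 1) - 1) (2 * ((b : ℕ) + 1)) x +
        hatL (j + 1) (2 * ((a : ℕ) + 1)) (2 * ((b : ℕ) + 1) + 1) x -
        hatL (j + 1) (2 * ((a : ℕ) + 1)) (2 * ((b : ℕ) + 1) - 1) x -
        hatL (j + 1) (2 * ((a : ℕ) + 1) + 1) (2 * ((b : ℕ) + 1)) x

namespace Stmt17Aux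

lemma one_le_abs_cast {m m' : ℕ} (h : m ≠ m') : 1 ≤ |(m':ℝ) - m| := by
  rcases Nat.lt_or_ge m' m with h1 | h1
  · rw [le_abs]; right
    have : (m':ℝ) + 1 ≤ m := by exact_mod_cast Nat.succ_le_of_lt h1
    linarith
  · have h1 : m < m' := lt_of_le_of_ne h1 h
    rw [le_abs]; left
    have : (m:ℝ) + 1 ≤ m' := by exact_mod_cast Nat.succ_le_of_lt h1
    linarith

lemma hatL_eval (J m k m' k' : ℕ) :
    hatL J m k ((m' : ℝ)/2^J, (k' : ℝ)/2^J) = if m = m' ∧ k = k' then 1 else 0 := by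
  have h2 : (0:ℝ) < 2 ^ J := by positivity
  have h2' : (0:ℝ) < ((2:ℝ) ^ J)⁻¹ := by positivity
  unfold hatL hat
  split_ifs with h
  · obtain ⟨rfl, rfl⟩ := h
    simp
  · have hd : m ≠ m' ∨ k ≠ k' := by tauto
    have key : ((2:ℝ)^J)⁻¹ ≤ max |(m':ℝ)/2^J - m/2^J| (max |(k':ℝ)/2^J - k/2^J|
        |((m':ℝ)/2^J - m/2^J) - ((k':ℝ)/2^J - k/2^J)|) := by
      have e1 : ∀ a b : ℕ, |(a:ℝ)/2^J - b/2^J| = |(a:ℝ) - b| / 2^J := by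
        intro a b
        rw [div_sub_div_same, abs_div, abs_of_pos h2]
      rcases hd with hd | hd
      · refine le_trans ?_ (le_max_left _ _)
        rw [e1, inv_eq_one_div]; apply div_le_div_of_nonneg_right ?_ h2.le
        exact one_le_abs_cast fun h => hd h
      · refine le_trans ?_ (le_trans (le_max_left _ _) (le_max_right _ _))
        rw [e1, inv_eq_one_div]; apply div_le_div_of_nonneg_right ?_ h2.le
        exact one_le_abs_cast fun h => hd h
    have : (1:ℝ) - (max |(m':ℝ)/2^J - m/2^J| (max |(k':ℝ)/2^J - k/2^J|
        |((m':ℝ)/2^J - m/2^J) - ((k':ℝ)/2^J - k/2^J)|)) / ((2:ℝ)^J)⁻¹ ≤ 0 := by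
      have := (one_le_div h2').mpr key
      linarith
    exact max_eq_left this

lemma parA : ∀ a b : ℕ, (2*a+2 = 2*b+2) ↔ a = b := by intro a b; omega
lemma parB : ∀ a b : ℕ, ¬(2*a+2+1 = 2*b+2) := by intro a b; omega
lemma parC : ∀ a b : ℕ, ¬(2*a+2-1 = 2*b+2) := by intro a b; omega
lemma parD : ∀ b : ℕ, ¬(1 = 2*b+2) := by intro b; omega
lemma parE : ∀ a b : ℕ, ¬(2*a+2 = 2*b+2+1) := by intro a b; omega
lemma parF : ∀ a b : ℕ, (2*a+2+1 = 2*b+2+1) ↔ a = b := by intro a b; omega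
lemma parG : ∀ a b : ℕ, (2*a+2-1 = 2*b+2+1) ↔ a = b+1 := by intro a b; omega
lemma parH : ∀ b : ℕ, ¬(1 = 2*b+2+1) := by intro b; omega
lemma parI : ∀ a : ℕ, ¬(2*a+2 = 1) := by intro a; omega
lemma parJ : ∀ a : ℕ, ¬(2*a+2+1 = 1) := by intro a; omega
lemma parK : ∀ a : ℕ, (2*a+2-1 = 1) ↔ a = 0 := by intro a; omega

end Stmt17Aux

open Stmt17Aux

/-- For every 2 ≤ n ≤ 2ʲ−1, the five families of prewavelets
ψ^{j,1}_{0,k}, ψ^{j,2}_{k,0} (1 ≤ k ≤ n−1) and ψ^{j,3}_{i,k}, ψ^{j,4}_{i,k},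
ψ^{j,5}_{i,k} (1 ≤ i,k ≤ n−1) are linearly independent. -/
theorem stmt17 (j n : ℕ) (hn2 : 2 ≤ n) (hn : n ≤ 2 ^ j - 1) :
    LinearIndependent ℝ (preWavelet j n) := by
  have h0 : 0 < n - 1 := by omega
  rw [Fintype.linearIndependent_iff]
  intro g hsum
  have key : ∀ m k : ℕ, ∑ i, g i * preWavelet j n i ((m : ℝ)/2^(j+1), (k : ℝ)/2^(j+1)) = 0 := by
    intro m k
    have := congrFun hsum ((m : ℝ)/2^(j+1), (k : ℝ)/2^(j+1))
    simpa [Finset.sum_apply] using this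
  have finP : ∀ (x : Fin (n-1) × Fin (n-1)) (y z : Fin (n-1)),
      (x.1 = y ∧ x.2 = z) ↔ x = (y, z) := by
    intro x y z
    constructor
    · rintro ⟨h1, h2⟩; exact Prod.ext h1 h2
    · rintro rfl; exact ⟨rfl, rfl⟩
  -- Equation at even-even points (2i+2, 2k+2)
  have E4 : ∀ i k : Fin (n-1),
      -g (.inr (.inl (i,k))) + -g (.inr (.inr (.inl (i,k)))) = 0 := by
    intro i k
    have h := key (2*(i:ℕ)+2) (2*(k:ℕ)+2)
    simp only [Fintype.sum_sum_type, preWavelet, hatL_eval, mul_ite, mul_one, mul_zero, mul_add,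
      mul_neg, neg_zero, add_zero, zero_add, Finset.sum_add_distrib, sub_eq_add_neg, neg_neg,
      mul_sub] at h
    simp only [parA, parB, parC, parD, false_and, and_false, if_false, Finset.sum_const_zero,
      Fin.val_inj, finP, Finset.sum_neg_distrib, Finset.sum_ite_eq', Finset.mem_univ, if_true,
      neg_zero, add_zero, zero_add] at h
    linarith
  -- Equation at odd-odd interior points (2i+3, 2k+3)
  have E3 : ∀ i k : Fin (n-1), g (.inr (.inl (i,k))) +
      (if h : (i:ℕ)+1 < n-1 ∧ (k:ℕ)+1 < n-1 then
        g (.inr (.inr (.inl (⟨(i:ℕ)+1, h.1⟩, ⟨(k:ℕ)+1, h.2⟩)))) else 0) = 0 := by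
    intro i k
    have h := key (2*(i:ℕ)+2+1) (2*(k:ℕ)+2+1)
    simp only [Fintype.sum_sum_type, preWavelet, hatL_eval, mul_ite, mul_one, mul_zero, mul_add,
      mul_neg, neg_zero, add_zero, zero_add, Finset.sum_add_distrib, sub_eq_add_neg, neg_neg,
      mul_sub] at h
    by_cases hr : (i:ℕ)+1 < n-1 ∧ (k:ℕ)+1 < n-1
    · have hR : ∀ x : Fin (n-1) × Fin (n-1),
          (((x.1:ℕ) = (i:ℕ)+1 ∧ (x.2:ℕ) = (k:ℕ)+1)) ↔
            x = (⟨(i:ℕ)+1, hr.1⟩, ⟨(k:ℕ)+1, hr.2⟩) := by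
        intro x
        constructor
        · rintro ⟨h1, h2⟩; exact Prod.ext (Fin.ext h1) (Fin.ext h2)
        · rintro rfl; exact ⟨rfl, rfl⟩
      simp only [parE, parF, parG, parH, parI, parJ, parK, parD, false_and, and_false,
        if_false, Finset.sum_const_zero, hR, Fin.val_inj, finP, Finset.sum_neg_distrib,
        Finset.sum_ite_eq', Finset.mem_univ, if_true, neg_zero, add_zero, zero_add] at h
      rw [dif_pos hr]
      linarith
    · have hRn : ∀ x : Fin (n-1) × Fin (n-1),
          ¬(((x.1:ℕ) = (i:ℕ)+1 ∧ (x.2:ℕ) = (k:ℕ)+1)) := by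
        rintro x ⟨h1, h2⟩
        have := x.1.isLt; have := x.2.isLt
        omega
      simp only [parE, parF, parG, parH, parI, parJ, parK, parD, false_and, and_false,
        if_false, Finset.sum_const_zero, hRn, Fin.val_inj, finP, Finset.sum_neg_distrib,
        Finset.sum_ite_eq', Finset.mem_univ, if_true, neg_zero, add_zero, zero_add] at h
      rw [dif_neg hr]
      linarith
  -- Equation at points (1, 2k+3)
  have E1 : ∀ k : Fin (n-1), g (.inl (.inl k)) +
      (if h : (k:ℕ)+1 < n-1 then
        g (.inr (.inr (.inl (⟨0, h0⟩, ⟨(k:ℕ)+1, h⟩)))) else 0) = 0 := by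
    intro k
    have h := key 1 (2*(k:ℕ)+2+1)
    simp only [Fintype.sum_sum_type, preWavelet, hatL_eval, mul_ite, mul_one, mul_zero, mul_add,
      mul_neg, neg_zero, add_zero, zero_add, Finset.sum_add_distrib, sub_eq_add_neg, neg_neg,
      mul_sub] at h
    by_cases hr : (k:ℕ)+1 < n-1
    · have hR : ∀ x : Fin (n-1) × Fin (n-1),
          (((x.1:ℕ) = 0 ∧ (x.2:ℕ) = (k:ℕ)+1)) ↔ x = (⟨0, h0⟩, ⟨(k:ℕ)+1, hr⟩) := by
        intro x
        constructor
        · rintro ⟨h1, h2⟩; exact Prod.ext (Fin.ext h1) (Fin.ext h2)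
        · rintro rfl; exact ⟨rfl, rfl⟩
      simp only [parE, parF, parG, parH, parI, parJ, parK, parD, eq_self_iff_true, true_and,
        and_true, false_and, and_false, if_false, Finset.sum_const_zero, hR, Fin.val_inj, finP,
        Finset.sum_neg_distrib, Finset.sum_ite_eq', Finset.mem_univ, if_true, neg_zero,
        add_zero, zero_add] at h
      rw [dif_pos hr]
      linarith
    · have hRn : ∀ x : Fin (n-1) × Fin (n-1),
          ¬(((x.1:ℕ) = 0 ∧ (x.2:ℕ) = (k:ℕ)+1)) := by
        rintro x ⟨h1, h2⟩
        have := x.2.isLt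
        omega
      simp only [parE, parF, parG, parH, parI, parJ, parK, parD, eq_self_iff_true, true_and,
        and_true, false_and, and_false, if_false, Finset.sum_const_zero, hRn, Fin.val_inj, finP,
        Finset.sum_neg_distrib, Finset.sum_ite_eq', Finset.mem_univ, if_true, neg_zero,
        add_zero, zero_add] at h
      rw [dif_neg hr]
      linarith
  -- Equation at points (2k+3, 1)
  have E2 : ∀ k : Fin (n-1), g (.inl (.inr k)) +
      (if h : (k:ℕ)+1 < n-1 then
        g (.inr (.inr (.inl (⟨(k:ℕ)+1, h⟩, ⟨0, h0⟩)))) else 0) = 0 := by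
    intro k
    have h := key (2*(k:ℕ)+2+1) 1
    simp only [Fintype.sum_sum_type, preWavelet, hatL_eval, mul_ite, mul_one, mul_zero, mul_add,
      mul_neg, neg_zero, add_zero, zero_add, Finset.sum_add_distrib, sub_eq_add_neg, neg_neg,
      mul_sub] at h
    by_cases hr : (k:ℕ)+1 < n-1
    · have hR : ∀ x : Fin (n-1) × Fin (n-1),
          (((x.1:ℕ) = (k:ℕ)+1 ∧ (x.2:ℕ) = 0)) ↔ x = (⟨(k:ℕ)+1, hr⟩, ⟨0, h0⟩) := by
        intro x
        constructor
        · rintro ⟨h1, h2⟩; exact Prod.ext (Fin.ext h1) (Fin.ext h2)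
        · rintro rfl; exact ⟨rfl, rfl⟩
      simp only [parE, parF, parG, parH, parI, parJ, parK, parD, eq_self_iff_true, true_and,
        and_true, false_and, and_false, if_false, Finset.sum_const_zero, hR, Fin.val_inj, finP,
        Finset.sum_neg_distrib, Finset.sum_ite_eq', Finset.mem_univ, if_true, neg_zero,
        add_zero, zero_add] at h
      rw [dif_pos hr]
      linarith
    · have hRn : ∀ x : Fin (n-1) × Fin (n-1),
          ¬(((x.1:ℕ) = (k:ℕ)+1 ∧ (x.2:ℕ) = 0)) := by
        rintro x ⟨h1, h2⟩
        have := x.1.isLt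
        omega
      simp only [parE, parF, parG, parH, parI, parJ, parK, parD, eq_self_iff_true, true_and,
        and_true, false_and, and_false, if_false, Finset.sum_const_zero, hRn, Fin.val_inj, finP,
        Finset.sum_neg_distrib, Finset.sum_ite_eq', Finset.mem_univ, if_true, neg_zero,
        add_zero, zero_add] at h
      rw [dif_neg hr]
      linarith
  -- Equation at points (2i+2, 1)
  have E5a : ∀ i : Fin (n-1),
      g (.inl (.inr i)) * 2 + g (.inr (.inr (.inl (i, ⟨0, h0⟩)))) +
        -g (.inr (.inr (.inr (i, ⟨0, h0⟩)))) = 0 := by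
    intro i
    have h := key (2*(i:ℕ)+2) 1
    simp only [Fintype.sum_sum_type, preWavelet, hatL_eval, mul_ite, mul_one, mul_zero, mul_add,
      mul_neg, neg_zero, add_zero, zero_add, Finset.sum_add_distrib, sub_eq_add_neg, neg_neg,
      mul_sub] at h
    have hR : ∀ x : Fin (n-1) × Fin (n-1),
        ((x.1 = i ∧ (x.2:ℕ) = 0)) ↔ x = (i, ⟨0, h0⟩) := by
      intro x
      constructor
      · rintro ⟨h1, h2⟩; exact Prod.ext h1 (Fin.ext h2)
      · rintro rfl; exact ⟨rfl, rfl⟩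
    simp only [parA, parB, parC, parD, parI, parJ, parK, eq_self_iff_true, true_and, and_true,
      false_and, and_false, if_false, Finset.sum_const_zero, Fin.val_inj, hR, finP,
      Finset.sum_neg_distrib, Finset.sum_ite_eq', Finset.mem_univ, if_true, neg_zero,
      add_zero, zero_add] at h
    linarith
  -- Equation at points (2i+2, 2b+3)
  have E5b : ∀ i b : Fin (n-1),
      g (.inr (.inl (i,b))) + g (.inr (.inr (.inr (i,b)))) +
      (if h : (b:ℕ)+1 < n-1 then
        g (.inr (.inr (.inl (i, ⟨(b:ℕ)+1, h⟩)))) -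
          g (.inr (.inr (.inr (i, ⟨(b:ℕ)+1, h⟩)))) else 0) = 0 := by
    intro i b
    have h := key (2*(i:ℕ)+2) (2*(b:ℕ)+2+1)
    simp only [Fintype.sum_sum_type, preWavelet, hatL_eval, mul_ite, mul_one, mul_zero, mul_add,
      mul_neg, neg_zero, add_zero, zero_add, Finset.sum_add_distrib, sub_eq_add_neg, neg_neg,
      mul_sub] at h
    by_cases hr : (b:ℕ)+1 < n-1
    · have hR : ∀ x : Fin (n-1) × Fin (n-1),
          ((x.1 = i ∧ (x.2:ℕ) = (b:ℕ)+1)) ↔ x = (i, ⟨(b:ℕ)+1, hr⟩) := by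
        intro x
        constructor
        · rintro ⟨h1, h2⟩; exact Prod.ext h1 (Fin.ext h2)
        · rintro rfl; exact ⟨rfl, rfl⟩
      simp only [parA, parB, parC, parD, parE, parF, parG, parH, parI, parJ, parK,
        eq_self_iff_true, true_and, and_true, false_and, and_false, if_false,
        Finset.sum_const_zero, Fin.val_inj, hR, finP, Finset.sum_neg_distrib,
        Finset.sum_ite_eq', Finset.mem_univ, if_true, neg_zero, add_zero, zero_add] at h
      rw [dif_pos hr]
      linarith
    · have hRn : ∀ x : Fin (n-1) × Fin (n-1),
          ¬((x.1 = i ∧ (x.2:ℕ) = (b:ℕ)+1)) := by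
        rintro x ⟨h1, h2⟩
        have := x.2.isLt
        omega
      simp only [parA, parB, parC, parD, parE, parF, parG, parH, parI, parJ, parK,
        eq_self_iff_true, true_and, and_true, false_and, and_false, if_false,
        Finset.sum_const_zero, Fin.val_inj, hRn, finP, Finset.sum_neg_distrib,
        Finset.sum_ite_eq', Finset.mem_univ, if_true, neg_zero, add_zero, zero_add] at h
      rw [dif_neg hr]
      linarith
  -- Elimination: families 3 and 4 vanish, by downward induction on distance to the boundary
  have h34 : ∀ r : ℕ, ∀ i k : Fin (n-1), n-1 ≤ (i:ℕ) + r → n-1 ≤ (k:ℕ) + r →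
      g (.inr (.inl (i,k))) = 0 ∧ g (.inr (.inr (.inl (i,k)))) = 0 := by
    intro r
    induction r with
    | zero =>
      intro i k h1 h2
      have := i.isLt
      omega
    | succ r ih =>
      intro i k h1 h2
      have e3 := E3 i k
      have hg3 : g (.inr (.inl (i,k))) = 0 := by
        by_cases hr : (i:ℕ)+1 < n-1 ∧ (k:ℕ)+1 < n-1
        · rw [dif_pos hr] at e3
          have h4 := (ih ⟨(i:ℕ)+1, hr.1⟩ ⟨(k:ℕ)+1, hr.2⟩
            (show n-1 ≤ (i:ℕ)+1 + r by omega) (show n-1 ≤ (k:ℕ)+1 + r by omega)).2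
          linarith
        · rw [dif_neg hr] at e3
          linarith
      refine ⟨hg3, ?_⟩
      have e4 := E4 i k
      linarith
  have hg3all : ∀ i k : Fin (n-1), g (.inr (.inl (i,k))) = 0 :=
    fun i k => (h34 (n-1) i k (by omega) (by omega)).1
  have hg4all : ∀ i k : Fin (n-1), g (.inr (.inr (.inl (i,k)))) = 0 :=
    fun i k => (h34 (n-1) i k (by omega) (by omega)).2
  have hg1 : ∀ k : Fin (n-1), g (.inl (.inl k)) = 0 := by
    intro k
    have e := E1 k
    by_cases hr : (k:ℕ)+1 < n-1
    · rw [dif_pos hr] at e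
      have := hg4all ⟨0, h0⟩ ⟨(k:ℕ)+1, hr⟩
      linarith
    · rw [dif_neg hr] at e
      linarith
  have hg2 : ∀ k : Fin (n-1), g (.inl (.inr k)) = 0 := by
    intro k
    have e := E2 k
    by_cases hr : (k:ℕ)+1 < n-1
    · rw [dif_pos hr] at e
      have := hg4all ⟨(k:ℕ)+1, hr⟩ ⟨0, h0⟩
      linarith
    · rw [dif_neg hr] at e
      linarith
  have hg5 : ∀ (m : ℕ) (i b : Fin (n-1)), (b:ℕ) = m →
      g (.inr (.inr (.inr (i,b)))) = 0 := by
    intro m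
    induction m with
    | zero =>
      intro i b hb
      have hb0 : b = ⟨0, h0⟩ := Fin.ext hb
      subst hb0
      have e := E5a i
      have := hg2 i
      have := hg4all i (⟨0, h0⟩ : Fin (n-1))
      linarith
    | succ m ih =>
      intro i b hb
      have hm : m < n-1 := by have := b.isLt; omega
      have e := E5b i ⟨m, hm⟩
      have hrange : ((⟨m, hm⟩ : Fin (n-1)):ℕ)+1 < n-1 := by
        have := b.isLt
        simpa using by omega
      rw [dif_pos hrange] at e
      have hb' : (⟨((⟨m, hm⟩ : Fin (n-1)):ℕ)+1, hrange⟩ : Fin (n-1)) = b := Fin.ext (by simpa using hb.symm)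
      rw [hb'] at e
      have i1 := ih i ⟨m, hm⟩ rfl
      have i2 := hg3all i ⟨m, hm⟩
      have i3 := hg4all i b
      linarith
  rintro ((a | a) | (⟨a, b⟩ | ⟨a, b⟩ | ⟨a, b⟩))
  · exact hg1 a
  · exact hg2 a
  · exact hg3all a b
  · exact hg4all a b
  · exact hg5 (b:ℕ) a b rfl
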